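/- Let $a_1,\dots,a_T$ be nonnegative real numbers with $a_1>0$, and let $0<\alpha<1$. Then $\left(\sum_{t=1}^T a_t\right)^{1-\alpha} \le \sum_{t=1}^T \frac{a_t}{\left(\sum_{k=1}^t a_k\right)^{\alpha}} \le \frac{1}{1-\alpha}\left(\sum_{t=1}^T a_t\right)^{1-\alpha}$. -/

import Mathlib

lemma key0 (α x y : ℝ) (hα0 : 0 < α) (hα1 : α < 1) (hy : 0 ≤ y)
    (hx : 0 < x) : (1 - α) * (x - y) / x ^ α ≤ x ^ (1 - α) - y ^ (1 - α) := by
  have hα1' : (0:ℝ) < 1 - α := by linarith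
  have hxa : (0:ℝ) < x ^ α := Real.rpow_pos_of_pos hx α
  have ht0 : 0 ≤ y / x := div_nonneg hy hx.le
  have hamgm : (y / x) ^ (1 - α) * 1 ^ α ≤ (1 - α) * (y / x) + α * 1 :=
    Real.geom_mean_le_arith_mean2_weighted hα1'.le hα0.le ht0 zero_le_one (by ring)
  have h1 : (y / x) ^ (1 - α) = y ^ (1 - α) / x ^ (1 - α) :=
    Real.div_rpow hy hx.le _
  rw [h1, Real.one_rpow, mul_one, mul_one] at hamgm
  have hx1a : x ^ (1 - α) = x / x ^ α := by
    rw [Real.rpow_sub hx, Real.rpow_one]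
  have hx1apos : (0:ℝ) < x ^ (1-α) := Real.rpow_pos_of_pos hx _
  have h2 : y ^ (1 - α) ≤ ((1 - α) * (y / x) + α) * x ^ (1 - α) := by
    have := mul_le_mul_of_nonneg_right hamgm hx1apos.le
    rwa [div_mul_cancel₀ _ hx1apos.ne'] at this
  have h3 : ((1 - α) * (y / x) + α) * x ^ (1 - α) = ((1 - α) * y + α * x) / x ^ α := by
    rw [hx1a]; field_simp
  rw [h3] at h2
  rw [hx1a]
  calc (1 - α) * (x - y) / x ^ α
      = x / x ^ α - ((1 - α) * y + α * x) / x ^ α := by field_simp; ring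
    _ ≤ x / x ^ α - y ^ (1 - α) := by linarith

theorem stmt0 (T : ℕ) (hT : 1 ≤ T) (a : ℕ → ℝ) (α : ℝ)
    (ha : ∀ t ∈ Finset.Icc 1 T, 0 ≤ a t) (ha1 : 0 < a 1)
    (hα0 : 0 < α) (hα1 : α < 1) :
    (∑ t ∈ Finset.Icc 1 T, a t) ^ (1 - α) ≤
      (∑ t ∈ Finset.Icc 1 T, a t / (∑ k ∈ Finset.Icc 1 t, a k) ^ α) ∧
    (∑ t ∈ Finset.Icc 1 T, a t / (∑ k ∈ Finset.Icc 1 t, a k) ^ α) ≤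
      (1 / (1 - α)) * (∑ t ∈ Finset.Icc 1 T, a t) ^ (1 - α) := by
  have hα1' : (0:ℝ) < 1 - α := by linarith
  have hsub : ∀ t, t ≤ T → Finset.Icc 1 t ⊆ Finset.Icc 1 T := by
    intro t ht
    exact Finset.Icc_subset_Icc le_rfl ht
  have hSpos : ∀ t, 1 ≤ t → t ≤ T → 0 < ∑ k ∈ Finset.Icc 1 t, a k := by
    intro t h1 h2
    refine lt_of_lt_of_le ha1 ?_
    refine Finset.single_le_sum (fun i hi => ha i (hsub t h2 hi)) ?_
    simp [h1]
  have hSmono : ∀ s t, s ≤ t → t ≤ T →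
      (∑ k ∈ Finset.Icc 1 s, a k) ≤ ∑ k ∈ Finset.Icc 1 t, a k := by
    intro s t hst ht
    refine Finset.sum_le_sum_of_subset_of_nonneg (Finset.Icc_subset_Icc le_rfl hst) ?_
    intro i hi _
    exact ha i (hsub t ht hi)
  set S : ℝ := ∑ k ∈ Finset.Icc 1 T, a k with hS
  have hSTpos : 0 < S := hSpos T hT le_rfl
  constructor
  · -- lower bound
    have h1 : S ^ (1 - α) = ∑ t ∈ Finset.Icc 1 T, a t / S ^ α := by
      rw [← Finset.sum_div, ← hS, Real.rpow_sub hSTpos, Real.rpow_one]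
    rw [h1]
    refine Finset.sum_le_sum ?_
    intro t ht
    have ht1 : 1 ≤ t := (Finset.mem_Icc.mp ht).1
    have ht2 : t ≤ T := (Finset.mem_Icc.mp ht).2
    have hp := hSpos t ht1 ht2
    gcongr
    · exact ha t ht
    · exact hSmono t T ht2 le_rfl
  · -- upper bound by induction
    have main : ∀ n, 1 ≤ n → n ≤ T →
        (∑ t ∈ Finset.Icc 1 n, a t / (∑ k ∈ Finset.Icc 1 t, a k) ^ α) ≤
          (1 / (1 - α)) * (∑ k ∈ Finset.Icc 1 n, a k) ^ (1 - α) := by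
      intro n hn
      induction n, hn using Nat.le_induction with
      | base =>
        intro _
        have hp := hSpos 1 le_rfl hT
        simp only [Finset.Icc_self, Finset.sum_singleton] at *
        have hkey := key0 α (a 1) 0 hα0 hα1 le_rfl ha1
        rw [Real.zero_rpow (by linarith : (1:ℝ) - α ≠ 0), sub_zero, sub_zero] at hkey
        have heq : a 1 / a 1 ^ α = (1 / (1 - α)) * ((1 - α) * a 1 / a 1 ^ α) := by
          field_simp
        rw [heq]
        have := mul_le_mul_of_nonneg_left hkey (le_of_lt (by positivity : (0:ℝ) < 1 / (1 - α)))
        exact this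
      | succ n hn ih =>
        intro hnT
        have hnT' : n ≤ T := le_of_lt (Nat.lt_of_lt_of_le (Nat.lt_succ_self n) hnT)
        have ih' := ih hnT'
        rw [Finset.sum_Icc_succ_top (by omega : 1 ≤ n + 1)]
        have hx : 0 < ∑ k ∈ Finset.Icc 1 (n+1), a k := hSpos (n+1) (by omega) hnT
        have hy : 0 ≤ ∑ k ∈ Finset.Icc 1 n, a k := (hSpos n hn hnT').le
        have hkey := key0 α (∑ k ∈ Finset.Icc 1 (n+1), a k) (∑ k ∈ Finset.Icc 1 n, a k)
          hα0 hα1 hy hx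
        have hdiff : (∑ k ∈ Finset.Icc 1 (n+1), a k) - (∑ k ∈ Finset.Icc 1 n, a k)
            = a (n+1) := by
          rw [Finset.sum_Icc_succ_top (by omega : 1 ≤ n + 1)]; ring
        rw [hdiff] at hkey
        have hstep : a (n+1) / (∑ k ∈ Finset.Icc 1 (n+1), a k) ^ α ≤
            (1 / (1 - α)) * ((∑ k ∈ Finset.Icc 1 (n+1), a k) ^ (1-α)
              - (∑ k ∈ Finset.Icc 1 n, a k) ^ (1-α)) := by
          rw [← mul_le_mul_iff_right₀ hα1']
          calc (1 - α) * (a (n+1) / (∑ k ∈ Finset.Icc 1 (n+1), a k) ^ α)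
              = (1 - α) * a (n+1) / (∑ k ∈ Finset.Icc 1 (n+1), a k) ^ α := by ring
            _ ≤ (∑ k ∈ Finset.Icc 1 (n+1), a k) ^ (1-α)
                - (∑ k ∈ Finset.Icc 1 n, a k) ^ (1-α) := hkey
            _ = (1 - α) * ((1 / (1 - α)) * ((∑ k ∈ Finset.Icc 1 (n+1), a k) ^ (1-α)
                - (∑ k ∈ Finset.Icc 1 n, a k) ^ (1-α))) := by
                field_simp
        calc (∑ t ∈ Finset.Icc 1 n, a t / (∑ k ∈ Finset.Icc 1 t, a k) ^ α)
              + a (n+1) / (∑ k ∈ Finset.Icc 1 (n+1), a k) ^ α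
            ≤ (1 / (1 - α)) * (∑ k ∈ Finset.Icc 1 n, a k) ^ (1-α)
              + (1 / (1 - α)) * ((∑ k ∈ Finset.Icc 1 (n+1), a k) ^ (1-α)
                - (∑ k ∈ Finset.Icc 1 n, a k) ^ (1-α)) := add_le_add ih' hstep
          _ = (1 / (1 - α)) * (∑ k ∈ Finset.Icc 1 (n+1), a k) ^ (1-α) := by ring
    exact main T hT le_rfl
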